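/- Let G be a finite simple graph with vertex set V and let v ∈ V be a fixed (identity) vertex. Define recursively h : ℕ → V → (ℕ → ℕ) by h^0_u[j] = 0 for all u and j, and for k ≥ 0: h^{k+1}_u[1] = Σ_{w ∈ N(u)} 𝟙[w = v], and h^{k+1}_u[j] = Σ_{w ∈ N(u)} h^k_w[j−1] for j ≥ 2. Then for every K ≥ 1 and every j with 1 ≤ j ≤ K, the value h^K_v[j] equals the number of closed walks of length j at v in G (i.e., walks of length j that start and end at v). -/

import Mathlib

open Finset

/-- The recursively defined ID-GNN embedding with identity coloring at `v`:
`h^0_u[j] = 0`, `h^{k+1}_u[1] = Σ_{w ∈ N(u)} 𝟙[w = v]`, and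
`h^{k+1}_u[j] = Σ_{w ∈ N(u)} h^k_w[j-1]` for `j ≥ 2`. -/
def idgnnEmbed {V : Type*} [Fintype V] [DecidableEq V]
    (G : SimpleGraph V) [DecidableRel G.Adj] (v : V) : ℕ → V → ℕ → ℕ
  | 0, _, _ => 0
  | k + 1, u, j =>
    match j with
    | 0 => 0
    | 1 => ∑ w ∈ G.neighborFinset u, if w = v then 1 else 0
    | j' + 2 => ∑ w ∈ G.neighborFinset u, idgnnEmbed G v k w (j' + 1)

section Aux

open SimpleGraph

variable {V : Type*} [Fintype V] [DecidableEq V] (G : SimpleGraph V) [DecidableRel G.Adj]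

private lemma card_fwl_zero (u v : V) :
    #(G.finsetWalkLength 0 u v) = if u = v then 1 else 0 := by
  unfold finsetWalkLength
  split_ifs with h
  · subst h; rfl
  · rfl

private lemma card_fwl_succ (n : ℕ) (u v : V) :
    #(G.finsetWalkLength (n+1) u v) = ∑ w ∈ G.neighborFinset u, #(G.finsetWalkLength n w v) := by
  rw [show G.finsetWalkLength (n+1) u v = Finset.univ.biUnion fun (w : G.neighborSet u) =>
      (G.finsetWalkLength n w v).map ⟨fun p => Walk.cons w.property p, fun _ _ h => by cases h; rfl⟩ from rfl]
  rw [Finset.card_biUnion]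
  · calc ∑ w : G.neighborSet u, #((G.finsetWalkLength n w v).map
          ⟨fun p => Walk.cons w.property p, fun _ _ h => by cases h; rfl⟩)
        = ∑ w : G.neighborSet u, #(G.finsetWalkLength n (w : V) v) := by simp
      _ = ∑ w : G.neighborFinset u, #(G.finsetWalkLength n (w : V) v) :=
          Fintype.sum_equiv (Equiv.subtypeEquivRight (fun w => by simp)) _ _ (fun w => rfl)
      _ = ∑ w ∈ G.neighborFinset u, #(G.finsetWalkLength n w v) :=
          Finset.sum_coe_sort (G.neighborFinset u) (fun w => #(G.finsetWalkLength n w v))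
  · intro w _ w' _ hne
    simp only [Finset.disjoint_left, Finset.mem_map]
    rintro p ⟨q, _, rfl⟩ ⟨q', _, h⟩
    have hs : u :: q'.support = u :: q.support := congrArg Walk.support h
    rw [Walk.support_eq_cons q,
      Walk.support_eq_cons q'] at hs
    simp only [List.cons.injEq] at hs
    exact hne (Subtype.ext hs.2.1.symm)

private lemma idgnn_eq_card_fwl (v : V) :
    ∀ j : ℕ, 1 ≤ j → ∀ k : ℕ, j ≤ k → ∀ u : V,
      idgnnEmbed G v k u j = #(G.finsetWalkLength j u v) := by
  intro j
  induction j with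
  | zero => omega
  | succ j ih =>
    intro _ k hk u
    obtain ⟨k', rfl⟩ : ∃ k', k = k' + 1 := ⟨k - 1, by omega⟩
    match j with
    | 0 =>
      rw [card_fwl_succ]
      show (∑ w ∈ G.neighborFinset u, if w = v then 1 else 0) = _
      exact Finset.sum_congr rfl fun w _ => (card_fwl_zero G w v).symm
    | j' + 1 =>
      rw [card_fwl_succ]
      show (∑ w ∈ G.neighborFinset u, idgnnEmbed G v k' w (j' + 1)) = _
      exact Finset.sum_congr rfl fun w _ => ih (by omega) k' (by omega) w

end Aux

/-- Proposition 2. For every `K ≥ 1` and every `j` with `1 ≤ j ≤ K`, the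
value `h^K_v[j]` of the recursively defined ID-GNN embedding at the identity vertex `v`
equals the number of closed walks of length `j` at `v` in `G`, i.e. walks of length `j`
that start and end at `v`. -/
theorem idgnnEmbed_counts_closed_walks
    {V : Type*} [Fintype V] [DecidableEq V]
    (G : SimpleGraph V) [DecidableRel G.Adj] (v : V) :
    ∀ K : ℕ, 1 ≤ K → ∀ j : ℕ, 1 ≤ j → j ≤ K →
      idgnnEmbed G v K v j = Fintype.card {p : G.Walk v v // p.length = j} := by
  intro K hK j hj hjK
  rw [idgnn_eq_card_fwl G v j hj K hjK v]
  exact (G.card_set_walk_length_eq v v j).symm
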